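/- Let K be a totally ordered finite set. There is a bijection between loopless binary matroids on ground set K and unidirectional bipartite graphs (U, V, E) with U ⊔ V = K, E ⊆ U × V, every vertex of V incident to at least one edge, and u < v for every edge (u,v) ∈ E. The bijection sends the matroid with lexicographically minimal basis A and exchange data {E_b : b ∉ A} to the graph (A, K \ A, {(a,b) : b ∉ A, a ∈ E_b}). -/

import Mathlib

open Matrix BigOperators

namespace Paper

variable (n : ℕ) (F : Type*) [Field F]

/-- The strictly upper triangular matrices `ut_n(F)`. -/
def utset : Set (Matrix (Fin n) (Fin n) F) :=
  {a | ∀ i j : Fin n, ¬ i < j → a i j = 0}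

/-- The unipotent upper triangular group `UT_n(F)` (as a set of matrices). -/
def UTset : Set (Matrix (Fin n) (Fin n) F) :=
  {g | (∀ i j : Fin n, j < i → g i j = 0) ∧ ∀ i : Fin n, g i i = 1}

/-- `N` is a normal subgroup of the group `UT_n(F)`. -/
def IsNormalSubgroupUT (N : Set (Matrix (Fin n) (Fin n) F)) : Prop :=
  N ⊆ UTset n F ∧ (1 : Matrix (Fin n) (Fin n) F) ∈ N ∧
    (∀ a ∈ N, ∀ b ∈ N, a * b ∈ N) ∧
    (∀ a ∈ N, ∃ b ∈ N, a * b = 1 ∧ b * a = 1) ∧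
    (∀ g ∈ UTset n F, ∀ g' : Matrix (Fin n) (Fin n) F, g * g' = 1 → g' * g = 1 →
      ∀ a ∈ N, g * a * g' ∈ N)

/-- The order `(i,j) ⪯ (r,s)` iff `r ≤ i` and `j ≤ s` on edges. -/
def edgeLe (p q : Fin n × Fin n) : Prop := q.1 ≤ p.1 ∧ p.2 ≤ q.2

/-- A set of increasing edges (a subset of `[[n]]`). -/
def IsEdgeSet (s : Set (Fin n × Fin n)) : Prop := ∀ p ∈ s, p.1 < p.2

/-- The upper set of `[[n]]` generated by `lam`. -/
def upGen (lam : Set (Fin n × Fin n)) : Set (Fin n × Fin n) :=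
  {q | q.1 < q.2 ∧ ∃ p ∈ lam, edgeLe n p q}

/-- `↑^ℓ lam`: elements at least `ℓ` in height above some element of `lam`. -/
def upNum (lam : Set (Fin n × Fin n)) (l : ℕ) : Set (Fin n × Fin n) :=
  {q | q.1 < q.2 ∧ ∃ p ∈ lam, edgeLe n p q ∧ ((p.2 : ℕ) - (p.1 : ℕ)) + l ≤ (q.2 : ℕ) - (q.1 : ℕ)}

/-- An upper set in the poset `[[n]]`. -/
def IsUpperSetE (s : Set (Fin n × Fin n)) : Prop :=
  IsEdgeSet n s ∧ ∀ p ∈ s, ∀ q : Fin n × Fin n, q.1 < q.2 → edgeLe n p q → q ∈ s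

/-- An antichain in the poset `[[n]]`. -/
def IsAntichainE (s : Set (Fin n × Fin n)) : Prop :=
  IsEdgeSet n s ∧ ∀ p ∈ s, ∀ q ∈ s, edgeLe n p q → p = q

/-- The set of minimal elements of `s`. -/
def minimalsE (s : Set (Fin n × Fin n)) : Set (Fin n × Fin n) :=
  {p | p ∈ s ∧ ∀ q ∈ s, edgeLe n q p → q = p}

/-- A set partition of `[n]`: an antichain in both endpoint orders. -/
def IsSetPartitionE (s : Set (Fin n × Fin n)) : Prop :=
  IsEdgeSet n s ∧ (∀ p ∈ s, ∀ q ∈ s, p.1 = q.1 → p = q) ∧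
    (∀ p ∈ s, ∀ q ∈ s, p.2 = q.2 → p = q)

/-- A nonnesting set partition of `[n]`. -/
def IsNNSP (s : Set (Fin n × Fin n)) : Prop :=
  IsSetPartitionE n s ∧ ∀ p ∈ s, ∀ q ∈ s, edgeLe n p q → p = q

/-- `nu` gives a splice `S = lam ⊔ nu` of the set partition `lam`. -/
def IsSplice (lam nu : Set (Fin n × Fin n)) : Prop :=
  IsSetPartitionE n lam ∧ IsSetPartitionE n nu ∧ Disjoint lam nu ∧
  (∀ p ∈ nu, ∃ j : Fin n, p.1 < j ∧ j < p.2 ∧ ((p.1, j) ∈ lam ∨ (j, p.2) ∈ lam)) ∧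
  (∀ j k : Fin n, j < k →
    ((∃ i, (i, k) ∈ nu ∧ (i, j) ∈ lam) ↔ (∃ l, (k, l) ∈ lam ∧ (j, l) ∈ nu)))

/-- A tight splice: `S ∩ ↑²lam = ∅`. -/
def IsTightSplice (lam nu : Set (Fin n × Fin n)) : Prop :=
  IsSplice n lam nu ∧ (lam ∪ nu) ∩ upNum n lam 2 = ∅

/-- A binding `(i,j,k,l)` of the splice `lam ⊔ nu`. -/
def IsBinding (lam nu : Set (Fin n × Fin n)) (b : Fin n × Fin n × Fin n × Fin n) : Prop :=
  (b.1, b.2.1) ∈ lam ∧ (b.2.2.1, b.2.2.2) ∈ lam ∧ (b.1, b.2.2.1) ∈ nu ∧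
    (b.2.1, b.2.2.2) ∈ nu ∧ b.2.1 < b.2.2.1

/-- Base relation generating the row equivalence on `nu`. -/
def rowRel (lam nu : Set (Fin n × Fin n)) (p q : Fin n × Fin n) : Prop :=
  ∃ b, IsBinding n lam nu b ∧
    ((p = (b.1, b.2.2.1) ∧ q = (b.2.1, b.2.2.2)) ∨ (q = (b.1, b.2.2.1) ∧ p = (b.2.1, b.2.2.2)))

/-- Base relation generating the column equivalence on `lam`. -/
def colRel (lam nu : Set (Fin n × Fin n)) (p q : Fin n × Fin n) : Prop :=
  ∃ b, IsBinding n lam nu b ∧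
    ((p = (b.1, b.2.1) ∧ q = (b.2.2.1, b.2.2.2)) ∨ (q = (b.1, b.2.1) ∧ p = (b.2.2.1, b.2.2.2)))

/-- The rows of the splice `lam ⊔ nu`. -/
def rowsOf (lam nu : Set (Fin n × Fin n)) : Set (Set (Fin n × Fin n)) :=
  {R | ∃ p ∈ nu, R = {q | q ∈ nu ∧ Relation.ReflTransGen (rowRel n lam nu) p q}}

/-- The columns of the splice `lam ⊔ nu`. -/
def colsOf (lam nu : Set (Fin n × Fin n)) : Set (Set (Fin n × Fin n)) :=
  {C | ∃ p ∈ lam, C = {q | q ∈ lam ∧ Relation.ReflTransGen (colRel n lam nu) p q}}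

/-- The set of bindings of the splice `lam ⊔ nu`. -/
def bindSet (lam nu : Set (Fin n × Fin n)) : Set (Fin n × Fin n × Fin n × Fin n) :=
  {b | IsBinding n lam nu b}

/-- Connectivity in the graph of `lam` on vertex set `[n]`. -/
def conn (lam : Set (Fin n × Fin n)) : Fin n → Fin n → Prop :=
  Relation.ReflTransGen (fun x y => (x, y) ∈ lam ∨ (y, x) ∈ lam)

/-- `ut_F`: span of the matrix units indexed by `s`. -/
def utOf (s : Set (Fin n × Fin n)) : Submodule F (Matrix (Fin n) (Fin n) F) :=
  Submodule.span F {m | ∃ p ∈ s, m = Matrix.single p.1 p.2 (1 : F)}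

/-- The support of a set of matrices. -/
def suppOf (N : Set (Matrix (Fin n) (Fin n) F)) : Set (Fin n × Fin n) :=
  {p | p.1 < p.2 ∧ ∃ a ∈ N, a p.1 p.2 ≠ 0}

/-- `[X, Y]`: the span of all brackets `a*b - b*a`, `a ∈ X`, `b ∈ Y`. -/
def brSpan (X Y : Set (Matrix (Fin n) (Fin n) F)) : Submodule F (Matrix (Fin n) (Fin n) F) :=
  Submodule.span F {z | ∃ a ∈ X, ∃ b ∈ Y, z = a * b - b * a}


/-- A collection of bases of a matroid on ground set `K`. -/
def IsMatroidBases (K : Type*) (B : Set (Set K)) : Prop :=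
  B.Nonempty ∧ ∀ A ∈ B, ∀ A' ∈ B, ∀ a ∈ A, a ∉ A' →
    ∃ b ∈ A', b ∉ A ∧ insert b (A \ {a}) ∈ B

/-- The matroid with bases `B` is loopless. -/
def IsLoopless (K : Type*) (B : Set (Set K)) : Prop := ∀ x : K, ∃ A ∈ B, x ∈ A

/-- The matroid with bases `B` is binary: it has an `F₂`-representation. -/
def IsBinaryM (K : Type*) (B : Set (Set K)) : Prop :=
  ∃ (r : ℕ) (φ : K → (Fin r → ZMod 2)), ∀ A : Set K, A ∈ B ↔
    (LinearIndependent (ZMod 2) (fun a : A => φ a) ∧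
      Submodule.span (ZMod 2) (φ '' A) = Submodule.span (ZMod 2) (Set.range φ))

/-- A loopless binary matroid on `K`. -/
def IsLooplessBinaryMatroid (K : Type*) (B : Set (Set K)) : Prop :=
  IsMatroidBases K B ∧ IsLoopless K B ∧ IsBinaryM K B

/-- A unidirectional bipartite graph `(U, V, E)` on `K` with increasing edges. -/
def IsIncreasingUniBipartite (K : Type*) [LinearOrder K]
    (G : Set K × Set K × Set (K × K)) : Prop :=
  G.1 ∪ G.2.1 = Set.univ ∧ Disjoint G.1 G.2.1 ∧
    (∀ e ∈ G.2.2, e.1 ∈ G.1 ∧ e.2 ∈ G.2.1 ∧ e.1 < e.2) ∧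
    ∀ v ∈ G.2.1, ∃ u : K, (u, v) ∈ G.2.2

/-- `A` is the lexicographically minimal member of `B` (smaller elements being more
significant). -/
def IsLexMin (K : Type*) [LinearOrder K] (A : Set K) (B : Set (Set K)) : Prop :=
  A ∈ B ∧ ∀ A' ∈ B, A' ≠ A →
    ∃ x, x ∈ A ∧ x ∉ A' ∧ ∀ y, y < x → (y ∈ A ↔ y ∈ A')

section Aux

open Submodule Set Function

open scoped Classical

set_option linter.unusedSectionVars false

variable {K : Type*} [Fintype K]
variable {V : Type*} [AddCommGroup V] [Module (ZMod 2) V]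
variable {V₂ : Type*} [AddCommGroup V₂] [Module (ZMod 2) V₂]

/-- bases of the linear matroid of `φ` -/
def Bof (φ : K → V) : Set (Set K) :=
  {X | LinearIndependent (ZMod 2) (fun x : X => φ x) ∧
       Submodule.span (ZMod 2) (φ '' X) = Submodule.span (ZMod 2) (Set.range φ)}

lemma image_subtype_ne (φ : K → V) (X : Set K) (a : K) :
    (fun x : X => φ x) '' {y : X | (y : K) ≠ a} = φ '' (X \ {a}) := by
  ext w
  constructor
  · rintro ⟨⟨y, hy⟩, hne, rfl⟩
    exact ⟨y, ⟨hy, hne⟩, rfl⟩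
  · rintro ⟨y, ⟨hy, hne⟩, rfl⟩
    exact ⟨⟨y, hy⟩, hne, rfl⟩

lemma Bof_comp (φ : K → V) (j : V →ₗ[ZMod 2] V₂) (hj : Function.Injective j) :
    Bof (fun x => j (φ x)) = Bof φ := by
  ext X
  have h1 : (fun x : X => j (φ x)) = (j : V → V₂) ∘ (fun x : X => φ x) := rfl
  have him : (fun x => j (φ x)) '' X = (j : V → V₂) '' (φ '' X) := by
    rw [Set.image_image]
  have hrg : Set.range (fun x => j (φ x)) = (j : V → V₂) '' (Set.range φ) := by
    rw [show (fun x => j (φ x)) = (j : V → V₂) ∘ φ from rfl, Set.range_comp]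
  constructor
  · rintro ⟨hi, hs⟩
    refine ⟨LinearIndependent.of_comp j (h1 ▸ hi), ?_⟩
    rw [him, hrg, ← Submodule.map_span, ← Submodule.map_span] at hs
    exact Submodule.map_injective_of_injective hj hs
  · rintro ⟨hi, hs⟩
    refine ⟨h1 ▸ (hi.map' j (LinearMap.ker_eq_bot.2 hj)), ?_⟩
    rw [him, hrg, ← Submodule.map_span, ← Submodule.map_span, hs]

lemma injOn_of_mem_Bof {φ : K → V} {X : Set K}
    (hX : X ∈ Bof φ) : Set.InjOn φ X := by
  intro x hx y hy hxy
  have := hX.1.injective (a₁ := ⟨x, hx⟩) (a₂ := ⟨y, hy⟩) hxy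
  exact congrArg Subtype.val this

lemma Bof_insert (φ : K → V) {X : Set K} (hX : X ∈ Bof φ) {a b : K} (ha : a ∈ X)
    (hb : φ b ∉ Submodule.span (ZMod 2) (φ '' (X \ {a}))) :
    insert b (X \ {a}) ∈ Bof φ := by
  by_cases hba : b = a
  · subst hba
    rw [Set.insert_diff_singleton, Set.insert_eq_of_mem ha]
    exact hX
  have hinjX : Set.InjOn φ X := injOn_of_mem_Bof hX
  have hset : LinearIndependent (ZMod 2) (fun w : φ '' X => (w : V)) :=
    (linearIndepOn_iff_image hinjX).1 hX.1
  have hsub : φ '' (X \ {a}) ⊆ φ '' X := Set.image_mono Set.diff_subset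
  have hset' := LinearIndepOn.mono (R := ZMod 2) (v := (id : V → V)) hset hsub
  have hins : LinearIndependent (ZMod 2)
      (fun w : (insert (φ b) (φ '' (X \ {a})) : Set V) => (w : V)) := hset'.insert (by rwa [Set.image_id])
  have hinj2 : Set.InjOn φ (insert b (X \ {a})) := by
    intro x hx y hy hxy
    rcases hx with rfl | hx <;> rcases hy with rfl | hy
    · rfl
    · exact absurd (hxy ▸ Submodule.subset_span (Set.mem_image_of_mem φ hy)) hb
    · exact absurd (hxy ▸ Submodule.subset_span (Set.mem_image_of_mem φ hx)) hb
    · exact hinjX hx.1 hy.1 hxy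
  have himg : φ '' (insert b (X \ {a})) = insert (φ b) (φ '' (X \ {a})) :=
    Set.image_insert_eq
  refine ⟨(linearIndepOn_iff_image hinj2).2 (by rw [himg]; exact hins), ?_⟩
  -- spanning
  have hHS : Submodule.span (ZMod 2) (φ '' (X \ {a})) ≤
      Submodule.span (ZMod 2) (φ '' (insert b (X \ {a}))) :=
    Submodule.span_mono (Set.image_mono (Set.subset_insert _ _))
  have hbS : φ b ∈ Submodule.span (ZMod 2) (φ '' (insert b (X \ {a}))) :=
    Submodule.subset_span (Set.mem_image_of_mem _ (Set.mem_insert b _))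
  have hφb_mem : φ b ∈ Submodule.span (ZMod 2) (insert (φ a) (φ '' (X \ {a}))) := by
    have himg2 : insert (φ a) (φ '' (X \ {a})) = φ '' X := by
      rw [← Set.image_insert_eq, Set.insert_diff_singleton, Set.insert_eq_of_mem ha]
    rw [himg2, hX.2]
    exact Submodule.subset_span (Set.mem_range_self b)
  rw [Submodule.mem_span_insert] at hφb_mem
  obtain ⟨c, z, hz, hbz⟩ := hφb_mem
  have hc : c ≠ 0 := by
    rintro rfl
    rw [zero_smul, zero_add] at hbz
    exact hb (hbz ▸ hz)
  have hφaS : φ a ∈ Submodule.span (ZMod 2) (φ '' (insert b (X \ {a}))) := by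
    have hz' : z ∈ Submodule.span (ZMod 2) (φ '' (insert b (X \ {a}))) := hHS hz
    have h2 : c • φ a = φ b - z := by rw [hbz]; abel
    have h3 : c • φ a ∈ Submodule.span (ZMod 2) (φ '' (insert b (X \ {a}))) :=
      h2 ▸ Submodule.sub_mem _ hbS hz'
    have h4 := Submodule.smul_mem _ c⁻¹ h3
    rwa [smul_smul, inv_mul_cancel₀ hc, one_smul] at h4
  have hXS : Submodule.span (ZMod 2) (φ '' X) ≤
      Submodule.span (ZMod 2) (φ '' (insert b (X \ {a}))) := by
    rw [Submodule.span_le]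
    rintro w ⟨x, hx, rfl⟩
    by_cases hxa : x = a
    · exact hxa ▸ hφaS
    · exact Submodule.subset_span (Set.mem_image_of_mem _ (Set.mem_insert_of_mem _ ⟨hx, hxa⟩))
  refine le_antisymm ?_ (hX.2 ▸ hXS)
  rw [Submodule.span_le]
  exact (Set.image_subset_range φ _).trans Submodule.subset_span

lemma Bof_exchange (φ : K → V) {X X' : Set K} (hX : X ∈ Bof φ) (hX' : X' ∈ Bof φ)
    {a : K} (ha : a ∈ X) (ha' : a ∉ X') :
    ∃ b ∈ X', b ∉ X ∧ insert b (X \ {a}) ∈ Bof φ := by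
  have hφa : φ a ∉ Submodule.span (ZMod 2) (φ '' (X \ {a})) := by
    have h := hX.1.notMem_span_image (s := {y : X | (y : K) ≠ a}) (x := ⟨a, ha⟩)
      (by simp)
    rwa [image_subtype_ne] at h
  have hbex : ∃ b ∈ X', φ b ∉ Submodule.span (ZMod 2) (φ '' (X \ {a})) := by
    by_contra h
    push_neg at h
    have himg : φ '' X' ⊆ ↑(Submodule.span (ZMod 2) (φ '' (X \ {a}))) := by
      rintro w ⟨b, hb, rfl⟩
      exact h b hb
    have hWH : Submodule.span (ZMod 2) (Set.range φ) ≤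
        Submodule.span (ZMod 2) (φ '' (X \ {a})) := by
      rw [← hX'.2]
      exact Submodule.span_le.2 himg
    exact hφa (hWH (hX.2 ▸ Submodule.subset_span (Set.mem_image_of_mem _ ha)))
  obtain ⟨b, hbX', hbH⟩ := hbex
  have hbX : b ∉ X := by
    intro hbX
    have hba : b ≠ a := fun h => ha' (h ▸ hbX')
    exact hbH (Submodule.subset_span ⟨b, ⟨hbX, hba⟩, rfl⟩)
  exact ⟨b, hbX', hbX, Bof_insert φ hX ha hbH⟩

noncomputable def basisOf (φ : K → V) (A : Set K) (hA : A ∈ Bof φ) :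
    Module.Basis A (ZMod 2) (Submodule.span (ZMod 2) (Set.range φ)) :=
  Module.Basis.mk (v := fun a : A => ⟨φ a, Submodule.subset_span (Set.mem_range_self _)⟩)
    (LinearIndependent.of_comp (Submodule.span (ZMod 2) (Set.range φ)).subtype
      (by exact hA.1))
    (by
      set W := Submodule.span (ZMod 2) (Set.range φ)
      set v : A → W := fun a : A => ⟨φ a, Submodule.subset_span (Set.mem_range_self _)⟩
      have himg : W.subtype '' (Set.range v) = φ '' A := by
        rw [← Set.range_comp]
        have : W.subtype ∘ v = fun a : A => φ a := rfl
        rw [this, ← Set.image_eq_range]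
      have key : Submodule.map W.subtype (Submodule.span (ZMod 2) (Set.range v)) = W := by
        rw [Submodule.map_span, himg, hA.2]
      intro w _
      have hw : (w : V) ∈ Submodule.map W.subtype (Submodule.span (ZMod 2) (Set.range v)) := by
        rw [key]; exact w.2
      obtain ⟨y, hy, hyw⟩ := hw
      have : y = w := Subtype.ext hyw
      exact this ▸ hy)

lemma basisOf_apply (φ : K → V) (A : Set K) (hA : A ∈ Bof φ) (a : A) :
    (basisOf φ A hA a : V) = φ a := by
  rw [basisOf, Module.Basis.mk_apply]

/-- the coordinates of `φ b` in the basis indexed by `A`. -/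
noncomputable def cvec (φ : K → V) (A : Set K) (hA : A ∈ Bof φ) (b : K) : A →₀ ZMod 2 :=
  (basisOf φ A hA).repr ⟨φ b, Submodule.subset_span (Set.mem_range_self _)⟩

lemma cvec_def (φ : K → V) (A : Set K) (hA : A ∈ Bof φ) (b : K) :
    cvec φ A hA b =
      (basisOf φ A hA).repr ⟨φ b, Submodule.subset_span (Set.mem_range_self _)⟩ := rfl

lemma cvec_sum (φ : K → V) (A : Set K) (hA : A ∈ Bof φ) (b : K) :
    ∑ a ∈ (cvec φ A hA b).support, φ (a : K) = φ b := by
  classical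
  have h1 : (Finsupp.linearCombination (ZMod 2) (basisOf φ A hA)) (cvec φ A hA b) =
      ⟨φ b, Submodule.subset_span (Set.mem_range_self _)⟩ := by
    rw [cvec_def]
    exact (basisOf φ A hA).linearCombination_repr _
  rw [Finsupp.linearCombination_apply, Finsupp.sum] at h1
  have hone : ∀ c : ZMod 2, c ≠ 0 → c = 1 := by decide
  have h2 : ∀ a ∈ (cvec φ A hA b).support,
      (cvec φ A hA b) a • (basisOf φ A hA) a = (basisOf φ A hA) a := by
    intro a ha
    rw [hone _ (Finsupp.mem_support_iff.1 ha), one_smul]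
  rw [Finset.sum_congr rfl h2] at h1
  have h3 := congrArg (Subtype.val) h1
  rw [Submodule.coe_sum] at h3
  have h4 : ∀ a ∈ (cvec φ A hA b).support, (((basisOf φ A hA) a : V)) = φ (a : K) :=
    fun a _ => basisOf_apply φ A hA a
  rw [Finset.sum_congr rfl h4] at h3
  exact h3

lemma cvec_mem_span_iff (φ : K → V) (A : Set K) (hA : A ∈ Bof φ) (b : K) (a : A) :
    φ b ∈ Submodule.span (ZMod 2) (φ '' (A \ {(a : K)})) ↔ cvec φ A hA b a = 0 := by
  classical
  have himg : (Submodule.span (ZMod 2) (Set.range φ)).subtype ''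
      ((basisOf φ A hA) '' {y : A | y ≠ a}) = φ '' (A \ {(a : K)}) := by
    have h1 : (Submodule.span (ZMod 2) (Set.range φ)).subtype ''
        ((basisOf φ A hA) '' {y : A | y ≠ a}) = (fun y : A => φ y) '' {y : A | y ≠ a} := by
      rw [Set.image_image]
      apply Set.image_congr
      intro y _
      exact basisOf_apply φ A hA y
    rw [h1]
    have h2 : {y : A | y ≠ a} = {y : A | (y : K) ≠ (a : K)} := by
      ext y; simp [Subtype.ext_iff]
    rw [h2, image_subtype_ne]
  have hker : φ b ∈ Submodule.span (ZMod 2) (φ '' (A \ {(a : K)})) ↔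
      (⟨φ b, Submodule.subset_span (Set.mem_range_self _)⟩ :
          Submodule.span (ZMod 2) (Set.range φ)) ∈
        Submodule.span (ZMod 2) ((basisOf φ A hA) '' {y : A | y ≠ a}) := by
    constructor
    · intro h
      rw [← himg, ← Submodule.map_span] at h
      obtain ⟨y, hy, hyw⟩ := h
      have hyy : y = (⟨φ b, Submodule.subset_span (Set.mem_range_self _)⟩ :
          Submodule.span (ZMod 2) (Set.range φ)) := Subtype.ext (by exact hyw)
      exact hyy ▸ hy
    · intro h
      have h2 : φ b ∈ Submodule.map (Submodule.span (ZMod 2) (Set.range φ)).subtype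
          (Submodule.span (ZMod 2) ((basisOf φ A hA) '' {y : A | y ≠ a})) :=
        ⟨_, h, rfl⟩
      rwa [Submodule.map_span, himg] at h2
  rw [hker, (basisOf φ A hA).mem_span_image, ← cvec_def]
  constructor
  · intro h
    by_contra hne
    exact (h (Finsupp.mem_support_iff.2 hne)) rfl
  · intro h y hy hya
    rw [Finset.mem_coe, Finsupp.mem_support_iff] at hy
    exact hy (hya ▸ h)

lemma cvec_spec (φ : K → V) (A : Set K) (hA : A ∈ Bof φ) {b : K} (hb : b ∉ A) (a : A) :
    insert b (A \ {(a : K)}) ∈ Bof φ ↔ cvec φ A hA b a ≠ 0 := by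
  classical
  have hφa_notin : φ (a : K) ∉ Submodule.span (ZMod 2) (φ '' (A \ {(a : K)})) := by
    have h := hA.1.notMem_span_image (s := {y : A | (y : K) ≠ (a : K)}) (x := a) (by simp)
    rwa [image_subtype_ne] at h
  constructor
  · intro hins hc0
    have hbH : φ b ∈ Submodule.span (ZMod 2) (φ '' (A \ {(a : K)})) :=
      (cvec_mem_span_iff φ A hA b a).2 hc0
    have hspan : Submodule.span (ZMod 2) (φ '' (insert b (A \ {(a : K)}))) =
        Submodule.span (ZMod 2) (φ '' (A \ {(a : K)})) := by
      rw [Set.image_insert_eq, Submodule.span_insert_eq_span hbH]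
    have : φ (a : K) ∈ Submodule.span (ZMod 2) (φ '' (A \ {(a : K)})) := by
      rw [← hspan, hins.2]
      exact Submodule.subset_span (Set.mem_range_self _)
    exact hφa_notin this
  · intro hc
    exact Bof_insert φ hA a.2 (fun h => hc ((cvec_mem_span_iff φ A hA b a).1 h))

/-- standard basis vector -/
noncomputable def sgl (u : K) : K → ZMod 2 := Pi.single u 1

lemma sgl_apply (u w : K) : sgl u w = if w = u then 1 else 0 := by
  classical
  rw [sgl, Pi.single_apply]

/-- The edge set of the graph associated to `(A, B)`. -/
def EdgesOf (A : Set K) (B : Set (Set K)) : Set (K × K) :=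
  {e | e.2 ∉ A ∧ e.1 ∈ A ∧ insert e.2 (A \ {e.1}) ∈ B}

/-- The canonical representation attached to a graph `(U, Uᶜ, E)`. -/
noncomputable def psiG (U : Set K) (E : Set (K × K)) : K → K → ZMod 2 :=
  fun x u => if x ∈ U then (if u = x then 1 else 0) else (if (u, x) ∈ E then 1 else 0)

lemma psiG_mem (U : Set K) (E : Set (K × K)) {u : K} (hu : u ∈ U) :
    psiG U E u = Pi.single u 1 := by
  funext w
  simp [psiG, hu, sgl, Pi.single_apply]

lemma psiG_apply_not_mem (U : Set K) (E : Set (K × K)) {x : K} (hx : x ∉ U) (u : K) :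
    psiG U E x u = if (u, x) ∈ E then 1 else 0 := by
  simp [psiG, hx]

lemma psiG_sum (U : Set K) (E : Set (K × K)) {x : K} (hx : x ∉ U) :
    psiG U E x = ∑ u ∈ Finset.univ.filter (fun u => (u, x) ∈ E), sgl u := by
  funext w
  rw [Finset.sum_apply]
  have h1 : ∀ u ∈ Finset.univ.filter (fun u => (u, x) ∈ E),
      sgl u w = if w = u then 1 else 0 := by
    intro u _
    simp [sgl_apply]
  rw [Finset.sum_congr rfl h1, Finset.sum_ite_eq, psiG_apply_not_mem U E hx]
  simp

lemma singles_li (U' : Set K) :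
    LinearIndependent (ZMod 2) (fun u : U' => sgl (u : K)) := by
  classical
  have h := (Pi.basisFun (ZMod 2) K).linearIndependent.comp
    (Subtype.val : U' → K) Subtype.val_injective
  have he : (⇑(Pi.basisFun (ZMod 2) K) ∘ (Subtype.val : U' → K)) =
      fun u : U' => sgl (u : K) := by
    funext u
    simp [Function.comp, Pi.basisFun_apply, sgl]
  rwa [he] at h

lemma psiG_base (U : Set K) (E : Set (K × K)) (hE : ∀ e ∈ E, e.1 ∈ U) :
    U ∈ Bof (psiG U E) := by
  constructor
  · have h : (fun u : U => psiG U E u) = fun u : U => sgl (u : K) :=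
      funext fun u => psiG_mem U E u.2
    rw [h]
    exact singles_li U
  · refine le_antisymm (Submodule.span_mono (Set.image_subset_range _ _)) ?_
    rw [Submodule.span_le]
    rintro w ⟨x, rfl⟩
    by_cases hx : x ∈ U
    · exact Submodule.subset_span (Set.mem_image_of_mem _ hx)
    · rw [psiG_sum U E hx]
      apply Submodule.sum_mem
      intro u hu
      have huU : u ∈ U := hE (u, x) (Finset.mem_filter.1 hu).2
      rw [show sgl u = psiG U E u from (psiG_mem U E huU).symm]
      exact Submodule.subset_span (Set.mem_image_of_mem _ huU)

lemma psiG_span_eval (U : Set K) (E : Set (K × K)) (a : K) {f : K → ZMod 2}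
    (hf : f ∈ Submodule.span (ZMod 2) (psiG U E '' (U \ {a}))) : f a = 0 := by
  have hle : Submodule.span (ZMod 2) (psiG U E '' (U \ {a})) ≤
      LinearMap.ker (LinearMap.proj (R := ZMod 2) (φ := fun _ : K => ZMod 2) a) := by
    rw [Submodule.span_le]
    rintro w ⟨u, hu, rfl⟩
    have hua : ¬ (a = u) := fun h => hu.2 (by simp [h.symm])
    rw [SetLike.mem_coe, LinearMap.mem_ker]
    rw [psiG_mem U E hu.1]
    simp [sgl_apply, hua]
  exact hle hf

lemma psiG_insert_iff (U : Set K) (E : Set (K × K)) (hE : ∀ e ∈ E, e.1 ∈ U)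
    {a b : K} (ha : a ∈ U) (hb : b ∉ U) :
    insert b (U \ {a}) ∈ Bof (psiG U E) ↔ (a, b) ∈ E := by
  have hU := psiG_base U E hE
  constructor
  · intro hins
    by_contra habE
    have hbH : psiG U E b ∈ Submodule.span (ZMod 2) (psiG U E '' (U \ {a})) := by
      rw [psiG_sum U E hb]
      apply Submodule.sum_mem
      intro u hu
      have huE : (u, b) ∈ E := (Finset.mem_filter.1 hu).2
      have huU : u ∈ U := hE _ huE
      have hua : u ∉ ({a} : Set K) := by
        simp only [Set.mem_singleton_iff]
        rintro rfl
        exact habE huE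
      rw [show sgl u = psiG U E u from (psiG_mem U E huU).symm]
      exact Submodule.subset_span (Set.mem_image_of_mem _ ⟨huU, hua⟩)
    have hspan : Submodule.span (ZMod 2) (psiG U E '' (insert b (U \ {a}))) =
        Submodule.span (ZMod 2) (psiG U E '' (U \ {a})) := by
      rw [Set.image_insert_eq, Submodule.span_insert_eq_span hbH]
    have hmem : psiG U E a ∈ Submodule.span (ZMod 2) (psiG U E '' (U \ {a})) := by
      rw [← hspan, hins.2]
      exact Submodule.subset_span (Set.mem_range_self _)
    have h0 := psiG_span_eval U E a hmem
    rw [psiG_mem U E ha] at h0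
    simp [sgl_apply] at h0
  · intro habE
    apply Bof_insert _ hU ha
    intro hbH
    have h0 := psiG_span_eval U E a hbH
    rw [psiG_apply_not_mem U E hb, if_pos habE] at h0
    exact one_ne_zero h0

lemma Bof_canon (φ : K → V) (A : Set K) (hA : A ∈ Bof φ) :
    Bof (psiG A (EdgesOf A (Bof φ))) = Bof φ := by
  classical
  set E := EdgesOf A (Bof φ) with hEdef
  set ψ := psiG A E with hψdef
  have hE1 : ∀ e ∈ E, e.1 ∈ A := fun e he => he.2.1
  have hAψ : A ∈ Bof ψ := psiG_base A E hE1
  set W' := Submodule.span (ZMod 2) (Set.range ψ) with hW'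
  set ψW : K → W' := fun x => ⟨ψ x, Submodule.subset_span (Set.mem_range_self _)⟩ with hψW
  have hBψ : Bof ψ = Bof ψW := by
    have h1 := Bof_comp ψW W'.subtype (Submodule.injective_subtype W')
    have h2 : (fun x => W'.subtype (ψW x)) = ψ := rfl
    rw [h2] at h1
    exact h1
  set e := (basisOf ψ A hAψ).equiv (basisOf φ A hA) (Equiv.refl A) with hedef
  have key : ∀ x : K, ((e (ψW x)) : V) = φ x := by
    intro x
    by_cases hx : x ∈ A
    · have h1 : ψW x = basisOf ψ A hAψ ⟨x, hx⟩ :=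
        Subtype.ext (by rw [basisOf_apply])
      rw [h1, hedef, Module.Basis.equiv_apply, Equiv.refl_apply]
      exact basisOf_apply φ A hA ⟨x, hx⟩
    · set c := cvec φ A hA x with hc
      have hsupp : ∀ a : A, a ∈ c.support ↔ ((a : K), x) ∈ E := by
        intro a
        rw [hc, Finsupp.mem_support_iff]
        constructor
        · intro h
          exact ⟨hx, a.2, (cvec_spec φ A hA hx a).2 h⟩
        · intro h
          exact (cvec_spec φ A hA hx a).1 h.2.2
      have hψx : ψW x = ∑ a ∈ c.support, basisOf ψ A hAψ a := by
        apply Subtype.ext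
        rw [Submodule.coe_sum]
        have h4 : ∀ a ∈ c.support, ((basisOf ψ A hAψ a : K → ZMod 2)) = sgl (a : K) := by
          intro a _
          rw [basisOf_apply]
          exact psiG_mem A E a.2
        rw [Finset.sum_congr rfl h4]
        show ψ x = _
        rw [hψdef, psiG_sum A E hx]
        refine Finset.sum_bij (fun u hu => (⟨u, hE1 (u, x) (Finset.mem_filter.1 hu).2⟩ : A))
          ?_ ?_ ?_ ?_
        · intro u hu
          exact (hsupp _).2 (Finset.mem_filter.1 hu).2
        · intro u hu u' hu' h
          exact congrArg Subtype.val h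
        · intro a ha
          refine ⟨(a : K), Finset.mem_filter.2 ⟨Finset.mem_univ _, (hsupp a).1 ha⟩, ?_⟩
          exact Subtype.ext rfl
        · intro u hu
          rfl
      have h5 : e (ψW x) = ∑ a ∈ c.support, basisOf φ A hA a := by
        rw [hψx, map_sum]
        refine Finset.sum_congr rfl (fun a _ => ?_)
        rw [hedef, Module.Basis.equiv_apply, Equiv.refl_apply]
      rw [h5, Submodule.coe_sum,
        Finset.sum_congr rfl (fun a _ => basisOf_apply φ A hA a)]
      exact cvec_sum φ A hA x
  have hinj : Function.Injective
      ((Submodule.span (ZMod 2) (Set.range φ)).subtype.comp e.toLinearMap) := by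
    simp only [LinearMap.coe_comp, LinearEquiv.coe_coe]
    exact (Submodule.injective_subtype _).comp e.injective
  have h6 := Bof_comp ψW ((Submodule.span (ZMod 2) (Set.range φ)).subtype.comp e.toLinearMap)
    hinj
  have h7 : (fun x => ((Submodule.span (ZMod 2) (Set.range φ)).subtype.comp e.toLinearMap)
      (ψW x)) = φ := funext fun x => key x
  rw [h7] at h6
  rw [hBψ, h6]


section LexOrder

variable {K : Type*} [LinearOrder K] [Fintype K]

lemma psiG_lexmin (U : Set K) (E : Set (K × K)) (hE : ∀ e ∈ E, e.1 ∈ U ∧ e.1 < e.2) :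
    IsLexMin K U (Bof (psiG U E)) := by
  refine ⟨psiG_base U E (fun e he => (hE e he).1), ?_⟩
  intro X hX hne
  have hD : {y : K | ¬(y ∈ U ↔ y ∈ X)}.Nonempty := by
    by_contra hD
    apply hne
    ext y
    by_contra hy
    exact hD ⟨y, fun h => hy h.symm⟩
  obtain ⟨x, hxD, hxmin⟩ := Set.exists_min_image _ id (Set.toFinite _) hD
  have hagree : ∀ y, y < x → (y ∈ U ↔ y ∈ X) := by
    intro y hy
    by_contra hyD
    exact absurd (hxmin y hyD) (not_le.2 hy)
  by_cases hxU : x ∈ U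
  · refine ⟨x, hxU, ?_, hagree⟩
    intro hxX
    exact hxD (Iff.intro (fun _ => hxX) (fun _ => hxU))
  · exfalso
    have hxX : x ∈ X := by
      by_contra hxX
      exact hxD (Iff.intro (fun h => absurd h hxU) (fun h => absurd h hxX))
    have hmem : psiG U E x ∈ Submodule.span (ZMod 2) (psiG U E '' (X \ {x})) := by
      rw [psiG_sum U E hxU]
      apply Submodule.sum_mem
      intro u hu
      have huE : (u, x) ∈ E := (Finset.mem_filter.1 hu).2
      obtain ⟨huU, hult⟩ := hE _ huE
      have huX : u ∈ X := (hagree u hult).1 huU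
      rw [show sgl u = psiG U E u from (psiG_mem U E huU).symm]
      refine Submodule.subset_span (Set.mem_image_of_mem _ ⟨huX, ?_⟩)
      simp only [Set.mem_singleton_iff]
      exact ne_of_lt hult
    have hni := hX.1.notMem_span_image (s := {y : X | (y : K) ≠ x}) (x := ⟨x, hxX⟩)
      (by simp)
    rw [image_subtype_ne] at hni
    exact hni hmem

lemma exists_isLexMin {B : Set (Set K)} (hB : B.Nonempty) : ∃ A, IsLexMin K A B := by
  classical
  set r : Set K → Set K → Prop :=
    fun A A' => ∃ x, x ∈ A ∧ x ∉ A' ∧ ∀ y, y < x → (y ∈ A ↔ y ∈ A') with hr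
  have htri : ∀ {A A' : Set K}, A ≠ A' → r A A' ∨ r A' A := by
    intro A A' h
    have hD : {y : K | ¬(y ∈ A ↔ y ∈ A')}.Nonempty := by
      by_contra hD
      apply h
      ext y
      by_contra hy
      exact hD ⟨y, hy⟩
    obtain ⟨x, hxD, hxmin⟩ := Set.exists_min_image _ id (Set.toFinite _) hD
    have hagree : ∀ y, y < x → (y ∈ A ↔ y ∈ A') := by
      intro y hy
      by_contra hyD
      exact absurd (hxmin y hyD) (not_le.2 hy)
    by_cases hxA : x ∈ A
    · left
      refine ⟨x, hxA, fun hxA' => hxD (Iff.intro (fun _ => hxA') (fun _ => hxA)), hagree⟩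
    · right
      have hxA' : x ∈ A' := by
        by_contra hxA'
        exact hxD (Iff.intro (fun hh => absurd hh hxA) (fun hh => absurd hh hxA'))
      exact ⟨x, hxA', hxA, fun y hy => (hagree y hy).symm⟩
  have hir : IsIrrefl (Set K) r := ⟨fun A ⟨x, h1, h2, _⟩ => h2 h1⟩
  have htr : IsTrans (Set K) r := by
    constructor
    rintro A B' C ⟨x, hxA, hxB, hagx⟩ ⟨x', hx'B, hx'C, hagx'⟩
    rcases lt_trichotomy x x' with hlt | heq | hgt
    · exact ⟨x, hxA, fun hxC => hxB ((hagx' x hlt).2 hxC),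
        fun y hy => (hagx y hy).trans (hagx' y (hy.trans hlt))⟩
    · exact absurd (heq ▸ hx'B) hxB
    · exact ⟨x', (hagx x' hgt).2 hx'B, hx'C,
        fun y hy => (hagx y (hy.trans hgt)).trans (hagx' y hy)⟩
  have hwf := @Finite.wellFounded_of_trans_of_irrefl (Set K) _ r htr hir
  obtain ⟨A, hAB, hmin⟩ := hwf.has_min B hB
  refine ⟨A, hAB, ?_⟩
  intro A' hA' hne
  rcases htri (fun h => hne h.symm) with h | h
  · exact h
  · exact absurd h (hmin A' hA')

lemma isLexMin_unique {B : Set (Set K)} {A A' : Set K} (h1 : IsLexMin K A B)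
    (h2 : IsLexMin K A' B) : A = A' := by
  by_contra hne
  obtain ⟨x, hxA, hxA', hag⟩ := h1.2 A' h2.1 (Ne.symm hne)
  obtain ⟨x', hx'A', hx'A, hag'⟩ := h2.2 A h1.1 hne
  rcases lt_trichotomy x x' with hlt | heq | hgt
  · exact hxA' ((hag' x hlt).2 hxA)
  · exact hx'A (heq ▸ hxA)
  · exact hx'A ((hag x' hgt).2 hx'A')

lemma edges_lt {B : Set (Set K)} {A : Set K} (hlex : IsLexMin K A B) {a b : K}
    (hbA : b ∉ A) (haA : a ∈ A) (hins : insert b (A \ {a}) ∈ B) : a < b := by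
  have hne : insert b (A \ {a}) ≠ A := fun h => hbA (h ▸ Set.mem_insert b _)
  obtain ⟨x, hxA, hxA', hag⟩ := hlex.2 _ hins hne
  have hxa : x = a := by
    by_contra hxa
    refine hxA' (Set.mem_insert_of_mem _ ⟨hxA, ?_⟩)
    simp only [Set.mem_singleton_iff]
    exact hxa
  rw [hxa] at hxA' hag
  rcases lt_trichotomy a b with h | h | h
  · exact h
  · exact absurd (h ▸ haA) hbA
  · exact absurd ((hag b h).2 (Set.mem_insert b _)) hbA

lemma graphOf_spec {B : Set (Set K)} (hB : IsLooplessBinaryMatroid K B) {A : Set K}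
    (hA : IsLexMin K A B) : IsIncreasingUniBipartite K (A, Aᶜ, EdgesOf A B) := by
  obtain ⟨hM, hL, r, φ, hφ⟩ := hB
  have hBof : B = Bof φ := Set.ext fun X => by rw [hφ X]; exact Iff.rfl
  refine ⟨Set.union_compl_self A, disjoint_compl_right, ?_, ?_⟩
  · rintro e ⟨h2, h1, hins⟩
    exact ⟨h1, h2, edges_lt hA h2 h1 hins⟩
  · intro v hv
    rw [Set.mem_compl_iff] at hv
    have hABof : A ∈ Bof φ := hBof ▸ hA.1
    obtain ⟨X, hXB, hvX⟩ := hL v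
    have hφv : φ v ≠ 0 := by
      have hXBof : X ∈ Bof φ := hBof ▸ hXB
      exact hXBof.1.ne_zero ⟨v, hvX⟩
    have hcne : cvec φ A hABof v ≠ 0 := by
      intro h0
      apply hφv
      have h1 : (basisOf φ A hABof).repr
          ⟨φ v, Submodule.subset_span (Set.mem_range_self _)⟩ = 0 := by
        rw [← cvec_def, h0]
      have h2 := (basisOf φ A hABof).repr.map_eq_zero_iff.1 h1
      have h3 := congrArg Subtype.val h2
      simpa using h3
    obtain ⟨a, ha⟩ := Finsupp.ne_iff.1 hcne
    refine ⟨(a : K), ?_⟩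
    have hins : insert v (A \ {(a : K)}) ∈ Bof φ :=
      (cvec_spec φ A hABof hv a).2 (by simpa using ha)
    exact ⟨hv, a.2, hBof ▸ hins⟩

lemma canon_eq {B : Set (Set K)} (hb : IsBinaryM K B) {A : Set K} (hA : A ∈ B) :
    Bof (psiG A (EdgesOf A B)) = B := by
  obtain ⟨r, φ, hφ⟩ := hb
  have hBof : B = Bof φ := Set.ext fun X => by rw [hφ X]; exact Iff.rfl
  rw [hBof] at hA ⊢
  exact Bof_canon φ A hA

end LexOrder

end Aux

/-- Loopless binary matroids on a finite totally ordered set `K` are in bijection with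
unidirectional bipartite graphs on `K` with increasing edges, the bijection sending the
matroid with lexicographically minimal basis `A` to `(A, K \ A, {(a,b) : b ∉ A, a ∈ E_b})`
where `E_b = {a ∈ A : (A ∪ {b}) \ {a}` is a basis `}`. -/
theorem loopless_binary_matroid_graph_bijection (K : Type*) [LinearOrder K] [Fintype K] :
    ∃ f : {B : Set (Set K) // IsLooplessBinaryMatroid K B} →
        {G : Set K × Set K × Set (K × K) // IsIncreasingUniBipartite K G},
      Function.Bijective f ∧
      ∀ M : {B : Set (Set K) // IsLooplessBinaryMatroid K B}, ∀ A : Set K,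
        IsLexMin K A M.1 →
        (f M : Set K × Set K × Set (K × K)) =
          (A, Aᶜ, {e : K × K | e.2 ∉ A ∧ e.1 ∈ A ∧ insert e.2 (A \ {e.1}) ∈ M.1}) := by
  classical
  have hlexE : ∀ M : {B : Set (Set K) // IsLooplessBinaryMatroid K B}, ∃ A, IsLexMin K A M.1 :=
    fun M => exists_isLexMin M.2.1.1
  choose lexA hlexA using hlexE
  have hgraph : ∀ M : {B : Set (Set K) // IsLooplessBinaryMatroid K B},
      IsIncreasingUniBipartite K (lexA M, (lexA M)ᶜ, EdgesOf (lexA M) M.1) :=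
    fun M => graphOf_spec M.2 (hlexA M)
  refine ⟨fun M => ⟨(lexA M, (lexA M)ᶜ, EdgesOf (lexA M) M.1), hgraph M⟩, ⟨?_, ?_⟩, ?_⟩
  · -- injectivity
    intro M M' h
    have hval : (lexA M, (lexA M)ᶜ, EdgesOf (lexA M) M.1) =
        (lexA M', (lexA M')ᶜ, EdgesOf (lexA M') M'.1) := congrArg Subtype.val h
    have h1 : lexA M = lexA M' := congrArg (fun G => G.1) hval
    have h3 : EdgesOf (lexA M) M.1 = EdgesOf (lexA M') M'.1 := congrArg (fun G => G.2.2) hval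
    apply Subtype.ext
    have e1 : Bof (psiG (lexA M) (EdgesOf (lexA M) M.1)) = M.1 :=
      canon_eq M.2.2.2 (hlexA M).1
    have e2 : Bof (psiG (lexA M') (EdgesOf (lexA M') M'.1)) = M'.1 :=
      canon_eq M'.2.2.2 (hlexA M').1
    rw [← e1, ← e2, h3, h1]
  · -- surjectivity
    rintro ⟨G, hG⟩
    obtain ⟨hcov, hdisj, hedge, hV⟩ := hG
    have hG21 : G.2.1 = G.1ᶜ := by
      ext x
      constructor
      · intro hx
        exact fun hxU => Set.disjoint_left.1 hdisj hxU hx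
      · intro hx
        have hx2 : x ∈ G.1 ∪ G.2.1 := hcov.symm ▸ Set.mem_univ x
        rcases hx2 with h | h
        · exact absurd h hx
        · exact h
    have hE1 : ∀ e ∈ G.2.2, e.1 ∈ G.1 := fun e he => (hedge e he).1
    have hE2 : ∀ e ∈ G.2.2, e.2 ∉ G.1 := fun e he => by
      have h := (hedge e he).2.1
      rw [hG21] at h
      exact h
    have hElt : ∀ e ∈ G.2.2, e.1 < e.2 := fun e he => (hedge e he).2.2
    set B := Bof (psiG G.1 G.2.2) with hB
    have hUB : G.1 ∈ B := psiG_base G.1 G.2.2 hE1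
    have hmat : IsMatroidBases K B := by
      refine ⟨⟨G.1, hUB⟩, ?_⟩
      intro X hX X' hX' a ha ha'
      obtain ⟨b, h1, h2, h3⟩ := Bof_exchange (psiG G.1 G.2.2) hX hX' ha ha'
      exact ⟨b, h1, h2, h3⟩
    have hloop : IsLoopless K B := by
      intro x
      by_cases hx : x ∈ G.1
      · exact ⟨G.1, hUB, hx⟩
      · obtain ⟨u, hu⟩ := hV x (by rw [hG21]; exact hx)
        have huU : u ∈ G.1 := hE1 _ hu
        exact ⟨_, (psiG_insert_iff G.1 G.2.2 hE1 huU hx).2 hu, Set.mem_insert x _⟩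
    have hbin : IsBinaryM K B := by
      refine ⟨Fintype.card K,
        fun x => (psiG G.1 G.2.2 x) ∘ (Fintype.equivFin K).symm, ?_⟩
      intro X
      have hj : Function.Injective
          ((LinearEquiv.funCongrLeft (ZMod 2) (ZMod 2)
            ((Fintype.equivFin K).symm)).toLinearMap :
            (K → ZMod 2) →ₗ[ZMod 2] (Fin (Fintype.card K) → ZMod 2)) :=
        (LinearEquiv.funCongrLeft (ZMod 2) (ZMod 2) ((Fintype.equivFin K).symm)).injective
      have hc := Bof_comp (psiG G.1 G.2.2)
        ((LinearEquiv.funCongrLeft (ZMod 2) (ZMod 2)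
          ((Fintype.equivFin K).symm)).toLinearMap) hj
      have heq : (fun x => ((LinearEquiv.funCongrLeft (ZMod 2) (ZMod 2)
          ((Fintype.equivFin K).symm)).toLinearMap) (psiG G.1 G.2.2 x)) =
          fun x : K => (psiG G.1 G.2.2 x) ∘ (Fintype.equivFin K).symm := rfl
      rw [heq] at hc
      rw [hB, ← hc]
      exact Iff.rfl
    refine ⟨⟨B, hmat, hloop, hbin⟩, ?_⟩
    apply Subtype.ext
    have hUlex : IsLexMin K G.1 B := psiG_lexmin G.1 G.2.2 (fun e he => ⟨hE1 e he, hElt e he⟩)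
    have hAU : lexA ⟨B, hmat, hloop, hbin⟩ = G.1 :=
      isLexMin_unique (hlexA ⟨B, hmat, hloop, hbin⟩) hUlex
    show (lexA ⟨B, hmat, hloop, hbin⟩, (lexA ⟨B, hmat, hloop, hbin⟩)ᶜ,
        EdgesOf (lexA ⟨B, hmat, hloop, hbin⟩) B) = G
    rw [hAU]
    have hEdges : EdgesOf G.1 B = G.2.2 := by
      ext e
      constructor
      · rintro ⟨h2, h1, hins⟩
        exact (psiG_insert_iff G.1 G.2.2 hE1 h1 h2).1 hins
      · intro he
        exact ⟨hE2 e he, hE1 e he,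
          (psiG_insert_iff G.1 G.2.2 hE1 (hE1 e he) (hE2 e he)).2 he⟩
    rw [hEdges, ← hG21]
  · -- the bijection sends a matroid to the graph of its lex-minimal basis
    intro M A hAlex
    obtain rfl : lexA M = A := isLexMin_unique (hlexA M) hAlex
    rfl


end Paper
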